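/- Let e ∈ (0,1]. Then −log e = max_{w > 0} (log w − w e + 1), and the maximum is attained at w = 1/e. Consequently, for the rate r = log(1 + SINR) with MMSE error e = 1/(1 + SINR), one has r = max_{w>0} (log w − w e + 1). -/
import Mathlib


/-- Rate–WMMSE equivalence: for `e ∈ (0,1]`, `−log e = max_{w>0} (log w − w e + 1)`,
attained at `w = 1/e`; hence for rate `r = log(1 + SINR)` and MMSE error
`e = 1/(1 + SINR)`, `r = max_{w>0} (log w − w e + 1)`. -/
theorem stmt_9 (e : ℝ) (he : 0 < e) (he1 : e ≤ 1) :
    IsGreatest {v : ℝ | ∃ w : ℝ, 0 < w ∧ v = Real.log w - w * e + 1} (-Real.log e) ∧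
      Real.log (1 / e) - (1 / e) * e + 1 = -Real.log e ∧
      ∀ s : ℝ, 0 ≤ s → e = 1 / (1 + s) →
        IsGreatest {v : ℝ | ∃ w : ℝ, 0 < w ∧ v = Real.log w - w * e + 1}
          (Real.log (1 + s)) := by
  have hattain : Real.log (1 / e) - (1 / e) * e + 1 = -Real.log e := by
    rw [Real.log_div one_ne_zero he.ne', Real.log_one, one_div_mul_cancel he.ne']
    ring
  have hub : ∀ v ∈ {v : ℝ | ∃ w : ℝ, 0 < w ∧ v = Real.log w - w * e + 1},
      v ≤ -Real.log e := by
    rintro v ⟨w, hw, rfl⟩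
    have h := Real.log_le_sub_one_of_pos (mul_pos hw he)
    rw [Real.log_mul hw.ne' he.ne'] at h
    linarith
  have hg : IsGreatest {v : ℝ | ∃ w : ℝ, 0 < w ∧ v = Real.log w - w * e + 1}
      (-Real.log e) := ⟨⟨1 / e, by positivity, hattain.symm⟩, hub⟩
  refine ⟨hg, hattain, fun s hs hse => ?_⟩
  have h1s : (0:ℝ) < 1 + s := by linarith
  have : Real.log (1 + s) = -Real.log e := by
    rw [hse, Real.log_div one_ne_zero h1s.ne', Real.log_one]; ring
  rw [this]; exact hg
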